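/- For all real g and p with 0 < g < 1 and 0 < p ≤ 1, one has ξ(g,p) < 1 if and only if p < g, and ξ(g,g) = 1, where ξ(g,p) = 1 − 2g/p + 2/(1 − g + p). Consequently, when g = p the measured intercontact time inherits the behaviour of the original intercontact time: cv_{S̃}² > 1 if and only if cv_S² > 1. -/

import Mathlib

/-- For `0 < g < 1` and `0 < p ≤ 1`: `ξ(g,p) = 1 - 2g/p + 2/(1-g+p) < 1` iff `p < g`,
and `ξ(g,g) = 1`. Consequently, when `g = p` the measured intercontact time inherits
the behaviour of the original one: `cv_{S̃}² = cv_S²/E[N] + cv_N² > 1` iff `cv_S² > 1`. -/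
theorem stmt_15 (g p : ℝ) (hg0 : 0 < g) (hg1 : g < 1) (hp0 : 0 < p) (hp1 : p ≤ 1) :
    (1 - 2 * g / p + 2 / (1 - g + p) < 1 ↔ p < g) ∧
      (1 - 2 * g / g + 2 / (1 - g + g) = 1) ∧
      ∀ c : ℝ, 0 ≤ c →
        (c / ((1 - g + g) / g) + (1 - g) * (g - g + 1) / (1 - g + g) ^ 2 > 1 ↔ c > 1) := by
  have hd : 0 < 1 - g + p := by linarith
  refine ⟨?_, ?_, ?_⟩
  · rw [show (1:ℝ) - 2*g/p + 2/(1-g+p) = 1 - (2*g/p - 2/(1-g+p)) by ring,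
      sub_lt_self_iff, sub_pos, div_lt_div_iff₀ hd hp0]
    constructor
    · intro h; nlinarith
    · intro h; nlinarith
  · field_simp
    ring
  · intro c hc
    have h1 : (1 : ℝ) - g + g = 1 := by ring
    rw [h1]
    norm_num
    constructor
    · intro h; nlinarith
    · intro h; nlinarith
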